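/- Let σ₊, σ₋ > 0, H ∈ ℝ, N ≥ 2 a natural number, and define S : ℝ → ℝ by S(z) = ((N−1)H√σ₋/(2(√σ₊+√σ₋)))·(z+√σ₊)·e^{−z/√σ₊} for z > 0 and S(z) = ((N−1)H√σ₊/(2(√σ₊+√σ₋)))·(−z+√σ₋)·e^{z/√σ₋} for z ≤ 0. Then S is continuous at 0, the one-sided derivatives satisfy σ₊S'(0⁺) = σ₋S'(0⁻), and S(0) = ((N−1)H√σ₊√σ₋)/(2(√σ₊+√σ₋)). -/

import Mathlib

open Real Set

noncomputable def Sstar (sp sm H : ℝ) (N : ℕ) (z : ℝ) : ℝ :=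
  if 0 < z then
    ((N - 1 : ℝ) * H * Real.sqrt sm / (2 * (Real.sqrt sp + Real.sqrt sm))) *
      (z + Real.sqrt sp) * Real.exp (-z / Real.sqrt sp)
  else
    ((N - 1 : ℝ) * H * Real.sqrt sp / (2 * (Real.sqrt sp + Real.sqrt sm))) *
      (-z + Real.sqrt sm) * Real.exp (z / Real.sqrt sm)

lemma aux_plus (C a : ℝ) (ha : a ≠ 0) :
    HasDerivAt (fun z => C * (z + a) * Real.exp (-z / a)) 0 0 := by
  have h1 : HasDerivAt (fun z : ℝ => C * (z + a)) C 0 := by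
    simpa using ((hasDerivAt_id (0:ℝ)).add_const a).const_mul C
  have h2 : HasDerivAt (fun z : ℝ => Real.exp (-z / a)) (-1 / a) 0 := by
    have h3 : HasDerivAt (fun z : ℝ => -z / a) (-1 / a) 0 :=
      ((hasDerivAt_id (0:ℝ)).neg.div_const a)
    simpa [Real.exp_zero] using h3.exp
  have := h1.fun_mul h2
  refine this.congr_deriv ?_
  simp [Real.exp_zero]
  field_simp
  ring

lemma aux_minus (C a : ℝ) (ha : a ≠ 0) :
    HasDerivAt (fun z => C * (-z + a) * Real.exp (z / a)) 0 0 := by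
  have h1 : HasDerivAt (fun z : ℝ => C * (-z + a)) (-C) 0 := by
    simpa using ((hasDerivAt_id (0:ℝ)).neg.add_const a).const_mul C
  have h2 : HasDerivAt (fun z : ℝ => Real.exp (z / a)) (1 / a) 0 := by
    have h3 : HasDerivAt (fun z : ℝ => z / a) (1 / a) 0 :=
      ((hasDerivAt_id (0:ℝ)).div_const a)
    simpa [Real.exp_zero] using h3.exp
  have := h1.fun_mul h2
  refine this.congr_deriv ?_
  simp [Real.exp_zero]
  field_simp
  ring

theorem stmt_8 (sp sm H : ℝ) (N : ℕ) (hsp : 0 < sp) (hsm : 0 < sm) (hN : 2 ≤ N) :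
    ContinuousAt (Sstar sp sm H N) 0 ∧
    (∃ dp dm : ℝ,
      HasDerivWithinAt (Sstar sp sm H N) dp (Set.Ici 0) 0 ∧
      HasDerivWithinAt (Sstar sp sm H N) dm (Set.Iic 0) 0 ∧
      sp * dp = sm * dm) ∧
    Sstar sp sm H N 0 =
      ((N - 1 : ℝ) * H * Real.sqrt sp * Real.sqrt sm) /
        (2 * (Real.sqrt sp + Real.sqrt sm)) := by
  have hap : Real.sqrt sp ≠ 0 := ne_of_gt (Real.sqrt_pos.2 hsp)
  have ham : Real.sqrt sm ≠ 0 := ne_of_gt (Real.sqrt_pos.2 hsm)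
  set A : ℝ := (N - 1 : ℝ) * H * Real.sqrt sm / (2 * (Real.sqrt sp + Real.sqrt sm)) with hA
  set B : ℝ := (N - 1 : ℝ) * H * Real.sqrt sp / (2 * (Real.sqrt sp + Real.sqrt sm)) with hB
  have h0 : Sstar sp sm H N 0 = B * Real.sqrt sm := by
    simp [Sstar, Real.exp_zero, ← hB]
  have hval : A * Real.sqrt sp = B * Real.sqrt sm := by
    rw [hA, hB]; ring
  have hEqp : ∀ y ∈ Set.Ici (0:ℝ),
      Sstar sp sm H N y = A * (y + Real.sqrt sp) * Real.exp (-y / Real.sqrt sp) := by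
    intro y hy
    rcases lt_or_eq_of_le (Set.mem_Ici.1 hy) with h | h
    · simp [Sstar, h, ← hA]
    · subst h
      simp [h0, Real.exp_zero, hval.symm]
  have hEqm : ∀ y ∈ Set.Iic (0:ℝ),
      Sstar sp sm H N y = B * (-y + Real.sqrt sm) * Real.exp (y / Real.sqrt sm) := by
    intro y hy
    have hy' : ¬ 0 < y := not_lt.2 (Set.mem_Iic.1 hy)
    simp [Sstar, hy', ← hB]
  have hp : HasDerivWithinAt (Sstar sp sm H N) 0 (Set.Ici 0) 0 :=
    ((aux_plus A (Real.sqrt sp) hap).hasDerivWithinAt).congr hEqp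
      (hEqp 0 (by simp))
  have hm : HasDerivWithinAt (Sstar sp sm H N) 0 (Set.Iic 0) 0 :=
    ((aux_minus B (Real.sqrt sm) ham).hasDerivWithinAt).congr hEqm
      (hEqm 0 (by simp))
  refine ⟨?_, ⟨0, 0, hp, hm, by ring⟩, ?_⟩
  · have := (hp.continuousWithinAt).union (hm.continuousWithinAt)
    rwa [Set.union_comm, Set.Iic_union_Ici, continuousWithinAt_univ] at this
  · rw [h0, hB]; ring
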